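/- Let ρ be an n × n Hermitian matrix over ℂ with eigenvalues p_1, …, p_n (counted with multiplicity). Then there exists an n × n doubly stochastic real matrix B such that the vector of diagonal entries of ρ equals B applied to the vector (p_1, …, p_n); consequently the vector of diagonal entries of ρ is majorized by the vector of eigenvalues of ρ. -/

import Mathlib

open Finset

lemma exists_topk {n k : ℕ} (y : Fin n → ℝ) (hk : k ≤ n) :
    ∃ T : Finset (Fin n), T.card = k ∧ ∀ j ∈ T, ∀ i ∉ T, y i ≤ y j := by
  induction k with
  | zero => exact ⟨∅, rfl, by simp⟩
  | succ k ih =>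
    obtain ⟨T, hT, hprop⟩ := ih (Nat.le_of_succ_le hk)
    have hne : (Tᶜ : Finset (Fin n)).Nonempty := by
      rw [← Finset.card_pos, Finset.card_compl, hT, Fintype.card_fin]; omega
    obtain ⟨j₀, hj₀, hmax⟩ := Finset.exists_max_image _ y hne
    refine ⟨insert j₀ T, ?_, ?_⟩
    · rw [Finset.card_insert_of_notMem (Finset.mem_compl.mp hj₀), hT]
    · intro j hj i hi
      have hiT : i ∉ T := fun h => hi (Finset.mem_insert_of_mem h)
      rcases Finset.mem_insert.mp hj with rfl | hjT
      · exact hmax i (Finset.mem_compl.mpr hiT)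
      · exact hprop j hjT i hiT

lemma weighted_le {n k : ℕ} (y c : Fin n → ℝ) (T : Finset (Fin n)) (hT : T.card = k)
    (hTne : T.Nonempty) (htop : ∀ j ∈ T, ∀ i ∉ T, y i ≤ y j)
    (hc0 : ∀ j, 0 ≤ c j) (hc1 : ∀ j, c j ≤ 1) (hsum : ∑ j, c j = k) :
    ∑ j, c j * y j ≤ ∑ j ∈ T, y j := by
  obtain ⟨j₀, hj₀, hmin⟩ := T.exists_min_image y hTne
  set t := y j₀ with ht
  have key : ∀ j, c j * y j ≤ (if j ∈ T then y j - t else 0) + c j * t := by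
    intro j
    by_cases h : j ∈ T
    · simp only [h, if_true]
      nlinarith [hc1 j, hc0 j, hmin j h]
    · simp only [h, if_false, zero_add]
      have : y j ≤ t := htop j₀ hj₀ j h
      nlinarith [hc0 j]
  calc ∑ j, c j * y j ≤ ∑ j, ((if j ∈ T then y j - t else 0) + c j * t) :=
        Finset.sum_le_sum fun j _ => key j
    _ = ∑ j ∈ T, (y j - t) + (∑ j, c j) * t := by
        rw [Finset.sum_add_distrib, ← Finset.sum_mul]
        congr 1
        rw [Finset.sum_ite_mem, Finset.univ_inter]
    _ = ∑ j ∈ T, y j := by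
        rw [Finset.sum_sub_distrib, Finset.sum_const, hT, hsum]; ring

lemma kMaxSum_bdd {n : ℕ} (v : Fin n → ℝ) (k : ℕ) :
    BddAbove {t : ℝ | ∃ s : Finset (Fin n), s.card = k ∧ t = ∑ i ∈ s, v i} := by
  apply Set.Finite.bddAbove
  apply Set.Finite.subset (Set.finite_range (fun s : Finset (Fin n) => ∑ i ∈ s, v i))
  rintro t ⟨s, _, rfl⟩
  exact ⟨s, rfl⟩

/-- The sum of the `k` largest entries of `v` (the maximum of `∑ i ∈ s, v i`
over subsets `s` of cardinality `k`), via `sSup`. -/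
noncomputable def kMaxSum {n : ℕ} (v : Fin n → ℝ) (k : ℕ) : ℝ :=
  sSup {t : ℝ | ∃ s : Finset (Fin n), s.card = k ∧ t = ∑ i ∈ s, v i}

lemma le_kMaxSum {n : ℕ} (v : Fin n → ℝ) {k : ℕ} (s : Finset (Fin n)) (hs : s.card = k) :
    ∑ i ∈ s, v i ≤ kMaxSum v k :=
  le_csSup (kMaxSum_bdd v k) ⟨s, hs, rfl⟩

lemma kMaxSum_le {n : ℕ} (v : Fin n → ℝ) {k : ℕ} (hk : k ≤ n) (a : ℝ)
    (h : ∀ s : Finset (Fin n), s.card = k → ∑ i ∈ s, v i ≤ a) : kMaxSum v k ≤ a := by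
  obtain ⟨s, _, hs⟩ := Finset.exists_subset_card_eq (s := (Finset.univ : Finset (Fin n))) (n := k)
    (by simpa using hk)
  exact csSup_le ⟨∑ i ∈ s, v i, s, hs, rfl⟩ (by rintro t ⟨s, hs, rfl⟩; exact h s hs)

/-- `x` is majorized by `y`: for every `1 ≤ k ≤ n` the sum of the `k` largest
entries of `x` is at most that of `y`, and the total sums agree. -/
def Majorizes {n : ℕ} (x y : Fin n → ℝ) : Prop :=
  (∀ k : ℕ, 1 ≤ k → k ≤ n → kMaxSum x k ≤ kMaxSum y k) ∧ (∑ i, x i = ∑ i, y i)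

theorem stmt4 (n : ℕ) (ρ : Matrix (Fin n) (Fin n) ℂ) (hρ : ρ.IsHermitian) :
    (∃ B : Matrix (Fin n) (Fin n) ℝ,
        ((∀ i j, 0 ≤ B i j) ∧ (∀ i, ∑ j, B i j = 1) ∧ (∀ j, ∑ i, B i j = 1)) ∧
        ∀ i, (ρ i i).re = ∑ j, B i j * hρ.eigenvalues j) ∧
    Majorizes (fun i => (ρ i i).re) hρ.eigenvalues := by
  set U : Matrix (Fin n) (Fin n) ℂ := (hρ.eigenvectorUnitary : Matrix (Fin n) (Fin n) ℂ) with hU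
  set B : Matrix (Fin n) (Fin n) ℝ := fun i j => Complex.normSq (U i j) with hB
  have hBnn : ∀ i j, 0 ≤ B i j := fun i j => Complex.normSq_nonneg _
  have hrow : ∀ i, ∑ j, B i j = 1 := by
    intro i
    have h1 : U * star U = 1 := Matrix.mem_unitaryGroup_iff.mp hρ.eigenvectorUnitary.2
    have h2 : (U * star U) i i = 1 := by rw [h1]; simp
    rw [Matrix.mul_apply] at h2
    simp only [Matrix.star_apply, Complex.star_def, Complex.mul_conj] at h2
    have := congrArg Complex.re h2
    simpa using this
  have hcol : ∀ j, ∑ i, B i j = 1 := by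
    intro j
    have h1 : star U * U = 1 := Matrix.mem_unitaryGroup_iff'.mp hρ.eigenvectorUnitary.2
    have h2 : (star U * U) j j = 1 := by rw [h1]; simp
    rw [Matrix.mul_apply] at h2
    simp only [Matrix.star_apply, Complex.star_def] at h2
    have h3 : ∀ i, (starRingEnd ℂ) (U i j) * U i j = (Complex.normSq (U i j) : ℂ) := by
      intro i; rw [mul_comm, Complex.mul_conj]
    rw [Finset.sum_congr rfl fun i _ => h3 i] at h2
    have := congrArg Complex.re h2
    simpa using this
  have hdiag : ∀ i, (ρ i i).re = ∑ j, B i j * hρ.eigenvalues j := by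
    intro i
    have hs := hρ.spectral_theorem
    have : ρ i i = ∑ j, (Complex.normSq (U i j) : ℂ) * (hρ.eigenvalues j : ℂ) := by
      conv_lhs => rw [hs, Unitary.conjStarAlgAut_apply]
      rw [Matrix.mul_apply]
      congr 1; ext j
      rw [Matrix.mul_apply, Finset.sum_eq_single j]
      · simp only [Matrix.diagonal_apply_eq, Function.comp_apply, Matrix.star_apply,
          Complex.star_def]
        rw [mul_right_comm, Complex.mul_conj]; rfl
      · intro b _ hb; simp [Matrix.diagonal_apply_ne _ hb]
      · simp
    rw [this]
    simp
    rfl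
  refine ⟨⟨B, ⟨hBnn, hrow, hcol⟩, hdiag⟩, ?_, ?_⟩
  · intro k hk1 hkn
    obtain ⟨T, hTcard, hTtop⟩ := exists_topk hρ.eigenvalues hkn
    have hTne : T.Nonempty := by rw [← Finset.card_pos, hTcard]; omega
    apply kMaxSum_le _ hkn
    intro s hs
    have hxs : ∑ i ∈ s, (fun i => (ρ i i).re) i = ∑ j, (∑ i ∈ s, B i j) * hρ.eigenvalues j := by
      simp only
      rw [Finset.sum_congr rfl fun i _ => hdiag i, Finset.sum_comm]
      congr 1; ext j
      rw [Finset.sum_mul]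
    rw [hxs]
    have h1 : ∑ j, (∑ i ∈ s, B i j) * hρ.eigenvalues j ≤ ∑ j ∈ T, hρ.eigenvalues j := by
      apply weighted_le _ _ T hTcard hTne hTtop
      · exact fun j => Finset.sum_nonneg fun i _ => hBnn i j
      · intro j
        calc ∑ i ∈ s, B i j ≤ ∑ i, B i j :=
              Finset.sum_le_sum_of_subset_of_nonneg (Finset.subset_univ s)
                (fun i _ _ => hBnn i j)
          _ = 1 := hcol j
      · rw [Finset.sum_comm]
        rw [Finset.sum_congr rfl fun i (_ : i ∈ s) => hrow i]
        simp [hs]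
    exact h1.trans (le_kMaxSum _ T hTcard)
  · rw [Finset.sum_congr rfl fun i _ => hdiag i, Finset.sum_comm]
    apply Finset.sum_congr rfl
    intro j _
    rw [← Finset.sum_mul, hcol j, one_mul]
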